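/- Let m ≥ 2 and p ≥ 1, let μ be a probability measure on m×p real matrices, let q₁,…,q_m be measurable functions from matrices to [0,1] with Σ_j q_j(X) = 1 for μ-a.e. X, and let β⁰ ∈ ℝᵖ with ‖β⁰‖ = 1. Assume the rank ordering property relative to β⁰ holds, and that for μ-a.e. X the values ⟨x₁,β⁰⟩,…,⟨x_m,β⁰⟩ are pairwise distinct. Let β ∈ ℝᵖ be such that μ{X : ⟨x_j − x_k, β⟩ = 0} = 0 for all j ≠ k. Then S(β⁰) − S(β) = (1/(2m(m−1)))·Σ_{j≠k} ∫_{X_{j,k,β}} |q_j(X) − q_k(X)| dμ(X), where the sum is over ordered pairs (j,k) with j ≠ k and X_{j,k,β} = {X : sign(⟨x_j − x_k, β⟩) ≠ sign(⟨x_j − x_k, β⁰⟩)}. -/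

import Mathlib

open MeasureTheory
open scoped Classical

/-- The multinomial population score
`S(β) = (1/(m(m−1)))·Σ_j ∫ q_j(X)·#{k ≠ j : ⟨x_j,β⟩ > ⟨x_k,β⟩} dμ(X)`,
where the "matrix" `X` is encoded by its rows `X : Fin m → ℝᵖ`. -/
noncomputable def multiScore {m p : ℕ}
    (μ : Measure (Fin m → EuclideanSpace ℝ (Fin p)))
    (q : Fin m → (Fin m → EuclideanSpace ℝ (Fin p)) → ℝ)
    (β : EuclideanSpace ℝ (Fin p)) : ℝ :=
  (1 / ((m : ℝ) * ((m : ℝ) - 1))) *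
    ∑ j : Fin m, ∫ X, q j X *
      ((Finset.univ.filter fun k : Fin m =>
        k ≠ j ∧ (inner ℝ (X k) β : ℝ) < (inner ℝ (X j) β : ℝ)).card : ℝ) ∂μ

lemma measurable_realSign : Measurable Real.sign := by
  have : Real.sign = fun r : ℝ => if r < 0 then (-1:ℝ) else if 0 < r then 1 else 0 := by
    funext r; rw [Real.sign]
  rw [this]
  exact Measurable.ite (measurableSet_lt measurable_id measurable_const) measurable_const
    (Measurable.ite (measurableSet_lt measurable_const measurable_id) measurable_const
      measurable_const)

lemma integrable_bdd {α : Type*} [MeasurableSpace α] (μ : Measure α) [IsFiniteMeasure μ]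
    {f : α → ℝ} (hf : Measurable f) (C : ℝ) (h : ∀ x, |f x| ≤ C) : Integrable f μ :=
  (integrable_const C).mono' hf.aestronglyMeasurable
    (Filter.Eventually.of_forall fun x => by simpa using h x)

lemma pointwise_key (qj qk d0 d : ℝ) (hd0 : d0 ≠ 0) (hd : d ≠ 0)
    (h1 : qk ≤ qj ↔ 0 ≤ d0) (h2 : qj ≤ qk ↔ d0 ≤ 0) :
    ((if 0 < d0 then qj else 0) - (if 0 < d then qj else 0)) +
      ((if 0 < -d0 then qk else 0) - (if 0 < -d then qk else 0)) =
    (if Real.sign d ≠ Real.sign d0 then |qj - qk| else 0) := by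
  rcases hd0.lt_or_gt with h0 | h0 <;> rcases hd.lt_or_gt with h | h
  · simp [not_lt.2 h0.le, not_lt.2 h.le, neg_pos, h0, h, Real.sign_of_neg]
  · have : qj ≤ qk := h2.2 h0.le
    simp [not_lt.2 h0.le, h, neg_pos, h0, not_lt.2 h.le, Real.sign_of_neg h0, Real.sign_of_pos h,
      abs_of_nonpos (sub_nonpos.2 this)]
    rw [if_neg (by norm_num)]; ring
  · have : qk ≤ qj := h1.2 h0.le
    simp [h0, h, neg_pos, not_lt.2 h0.le, not_lt.2 h.le, Real.sign_of_pos h0, Real.sign_of_neg h,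
      abs_of_nonneg (sub_nonneg.2 this)]
    rw [if_neg (by norm_num)]; ring
  · simp [h0, h, neg_pos, not_lt.2 h0.le, not_lt.2 h.le, Real.sign_of_pos]

section Aux

variable {m p : ℕ}

lemma meas_inner_aux (j k : Fin m) (β : EuclideanSpace ℝ (Fin p)) :
    Measurable fun X : Fin m → EuclideanSpace ℝ (Fin p) => (inner ℝ (X j - X k) β : ℝ) :=
  (Continuous.inner ((continuous_apply j).sub (continuous_apply k)) continuous_const).measurable

lemma integrable_G (μ : Measure (Fin m → EuclideanSpace ℝ (Fin p))) [IsProbabilityMeasure μ]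
    (q : Fin m → (Fin m → EuclideanSpace ℝ (Fin p)) → ℝ)
    (hqmeas : ∀ j, Measurable (q j)) (hq01 : ∀ j X, q j X ∈ Set.Icc (0 : ℝ) 1)
    (β : EuclideanSpace ℝ (Fin p)) (j k : Fin m) :
    Integrable (fun X => if 0 < (inner ℝ (X j - X k) β : ℝ) then q j X else 0) μ := by
  refine integrable_bdd μ ?_ 1 ?_
  · exact Measurable.ite (measurableSet_lt measurable_const (meas_inner_aux j k β))
      (hqmeas j) measurable_const
  · intro X
    rcases hq01 j X with ⟨h0l, h0r⟩
    by_cases h : 0 < (inner ℝ (X j - X k) β : ℝ)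
    · rw [if_pos h, abs_le]; exact ⟨by linarith, h0r⟩
    · rw [if_neg h]; simp

lemma score_eq (μ : Measure (Fin m → EuclideanSpace ℝ (Fin p))) [IsProbabilityMeasure μ]
    (q : Fin m → (Fin m → EuclideanSpace ℝ (Fin p)) → ℝ)
    (hqmeas : ∀ j, Measurable (q j)) (hq01 : ∀ j X, q j X ∈ Set.Icc (0 : ℝ) 1)
    (β : EuclideanSpace ℝ (Fin p)) :
    multiScore μ q β = (1 / ((m : ℝ) * ((m : ℝ) - 1))) *
      ∑ j : Fin m, ∑ k : Fin m, if j ≠ k then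
        ∫ X, (if 0 < (inner ℝ (X j - X k) β : ℝ) then q j X else 0) ∂μ else 0 := by
  unfold multiScore
  congr 1
  refine Finset.sum_congr rfl fun j _ => ?_
  have hpt : ∀ X : Fin m → EuclideanSpace ℝ (Fin p),
      q j X * ((Finset.univ.filter fun k : Fin m =>
        k ≠ j ∧ (inner ℝ (X k) β : ℝ) < (inner ℝ (X j) β : ℝ)).card : ℝ)
      = ∑ k : Fin m, if k ≠ j ∧ 0 < (inner ℝ (X j - X k) β : ℝ) then q j X else 0 := by
    intro X
    rw [Finset.card_filter]
    push_cast
    rw [Finset.mul_sum]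
    refine Finset.sum_congr rfl fun k _ => ?_
    simp only [mul_ite, mul_one, mul_zero, inner_sub_left, sub_pos]
  simp_rw [hpt]
  rw [integral_finset_sum]
  · refine Finset.sum_congr rfl fun k _ => ?_
    by_cases hk : k = j
    · subst hk
      simp
    · rw [if_pos (fun h => hk h.symm)]
      congr 1
      funext X
      simp only [Ne, hk, not_false_iff, true_and]
  · intro k _
    by_cases hk : k = j
    · subst hk; simp
    · have : (fun X : Fin m → EuclideanSpace ℝ (Fin p) =>
          if k ≠ j ∧ 0 < (inner ℝ (X j - X k) β : ℝ) then q j X else 0)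
          = fun X => if 0 < (inner ℝ (X j - X k) β : ℝ) then q j X else 0 := by
        funext X; simp only [Ne, hk, not_false_iff, true_and]
      rw [this]
      exact integrable_G μ q hqmeas hq01 β j k

end Aux

theorem multinomial_excess_risk_identity {m p : ℕ}
    (hm : 2 ≤ m) (hp : 1 ≤ p)
    (μ : Measure (Fin m → EuclideanSpace ℝ (Fin p))) [IsProbabilityMeasure μ]
    (q : Fin m → (Fin m → EuclideanSpace ℝ (Fin p)) → ℝ)
    (hqmeas : ∀ j, Measurable (q j))
    (hq01 : ∀ j X, q j X ∈ Set.Icc (0 : ℝ) 1)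
    (hqsum : ∀ᵐ X ∂μ, ∑ j : Fin m, q j X = 1)
    (β0 : EuclideanSpace ℝ (Fin p)) (hβ0 : ‖β0‖ = 1)
    -- rank ordering property relative to β0
    (hrank : ∀ᵐ X ∂μ, ∀ j k : Fin m,
      q k X ≤ q j X ↔ (inner ℝ (X k) β0 : ℝ) ≤ (inner ℝ (X j) β0 : ℝ))
    -- the values ⟨x_j, β0⟩ are a.e. pairwise distinct
    (hdistinct : ∀ᵐ X ∂μ, ∀ j k : Fin m, j ≠ k →
      (inner ℝ (X j) β0 : ℝ) ≠ (inner ℝ (X k) β0 : ℝ))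
    (β : EuclideanSpace ℝ (Fin p))
    (hnull : ∀ j k : Fin m, j ≠ k →
      μ {X | (inner ℝ (X j - X k) β : ℝ) = 0} = 0) :
    multiScore μ q β0 - multiScore μ q β =
      (1 / (2 * (m : ℝ) * ((m : ℝ) - 1))) *
        ∑ j : Fin m, ∑ k : Fin m,
          if j ≠ k then
            ∫ X in {X : Fin m → EuclideanSpace ℝ (Fin p) |
                Real.sign (inner ℝ (X j - X k) β : ℝ) ≠
                  Real.sign (inner ℝ (X j - X k) β0 : ℝ)},
              |q j X - q k X| ∂μ
          else 0 := by
  -- notation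
  set G : EuclideanSpace ℝ (Fin p) → Fin m → Fin m →
      (Fin m → EuclideanSpace ℝ (Fin p)) → ℝ :=
    fun γ j k X => if 0 < (inner ℝ (X j - X k) γ : ℝ) then q j X else 0 with hG
  have hGint : ∀ γ j k, Integrable (G γ j k) μ := fun γ j k =>
    integrable_G μ q hqmeas hq01 γ j k
  set F : Fin m → Fin m → ℝ := fun j k => (∫ X, G β0 j k X ∂μ) - ∫ X, G β j k X ∂μ with hF
  -- the per-pair identity
  have key : ∀ j k : Fin m, j ≠ k →
      F j k + F k j =
        ∫ X in {X : Fin m → EuclideanSpace ℝ (Fin p) |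
            Real.sign (inner ℝ (X j - X k) β : ℝ) ≠
              Real.sign (inner ℝ (X j - X k) β0 : ℝ)},
          |q j X - q k X| ∂μ := by
    intro j k hjk
    set D : Set (Fin m → EuclideanSpace ℝ (Fin p)) :=
      {X | Real.sign (inner ℝ (X j - X k) β : ℝ) ≠ Real.sign (inner ℝ (X j - X k) β0 : ℝ)} with hD
    have hDmeas : MeasurableSet D :=
      (measurableSet_eq_fun (measurable_realSign.comp (meas_inner_aux j k β))
        (measurable_realSign.comp (meas_inner_aux j k β0))).compl
    have hd : ∀ᵐ X ∂μ, (inner ℝ (X j - X k) β : ℝ) ≠ 0 := by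
      rw [ae_iff]
      simpa [not_not] using hnull j k hjk
    have step1 : F j k + F k j =
        ∫ X, (G β0 j k X - G β j k X) + (G β0 k j X - G β k j X) ∂μ := by
      have h1 : Integrable (fun X => G β0 j k X - G β j k X) μ :=
        (hGint β0 j k).sub (hGint β j k)
      have h2 : Integrable (fun X => G β0 k j X - G β k j X) μ :=
        (hGint β0 k j).sub (hGint β k j)
      rw [integral_add h1 h2,
        integral_sub (hGint β0 j k) (hGint β j k),
        integral_sub (hGint β0 k j) (hGint β k j)]
    rw [step1, ← integral_indicator hDmeas]
    refine integral_congr_ae ?_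
    filter_upwards [hrank, hdistinct, hd] with X hr hdist hdX
    simp only [hG, Set.indicator_apply, hD, Set.mem_setOf_eq, inner_sub_left]
    simp only [inner_sub_left] at hdX
    have hd0' : (inner ℝ (X j) β0 : ℝ) - inner ℝ (X k) β0 ≠ 0 :=
      sub_ne_zero.2 (hdist j k hjk)
    have h1' : q k X ≤ q j X ↔ 0 ≤ (inner ℝ (X j) β0 : ℝ) - inner ℝ (X k) β0 :=
      (hr j k).trans sub_nonneg.symm
    have h2' : q j X ≤ q k X ↔ (inner ℝ (X j) β0 : ℝ) - inner ℝ (X k) β0 ≤ 0 :=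
      (hr k j).trans sub_nonpos.symm
    have := pointwise_key (q j X) (q k X)
      ((inner ℝ (X j) β0 : ℝ) - inner ℝ (X k) β0)
      ((inner ℝ (X j) β : ℝ) - inner ℝ (X k) β) hd0' hdX h1' h2'
    rw [neg_sub, neg_sub] at this
    exact this
  -- rewrite both scores
  rw [score_eq μ q hqmeas hq01 β0, score_eq μ q hqmeas hq01 β]
  rw [← mul_sub, ← Finset.sum_sub_distrib]
  simp_rw [← Finset.sum_sub_distrib]
  have hite : ∀ j k : Fin m,
      ((if j ≠ k then ∫ X, G β0 j k X ∂μ else 0) - if j ≠ k then ∫ X, G β j k X ∂μ else 0)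
        = if j ≠ k then F j k else 0 := by
    intro j k; by_cases h : j ≠ k <;> simp [h, hF]
  simp only [hG] at hite
  simp_rw [hite]
  -- symmetrization
  have hsymm : (∑ j : Fin m, ∑ k : Fin m, if j ≠ k then F j k else 0)
      = ∑ j : Fin m, ∑ k : Fin m, if j ≠ k then F k j else 0 := by
    rw [Finset.sum_comm]
    refine Finset.sum_congr rfl fun j _ => Finset.sum_congr rfl fun k _ => ?_
    simp only [ne_comm]
  have hdouble : (2 : ℝ) * (∑ j : Fin m, ∑ k : Fin m, if j ≠ k then F j k else 0)
      = ∑ j : Fin m, ∑ k : Fin m,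
          if j ≠ k then
            ∫ X in {X : Fin m → EuclideanSpace ℝ (Fin p) |
                Real.sign (inner ℝ (X j - X k) β : ℝ) ≠
                  Real.sign (inner ℝ (X j - X k) β0 : ℝ)},
              |q j X - q k X| ∂μ
          else 0 := by
    rw [two_mul]
    nth_rewrite 2 [hsymm]
    rw [← Finset.sum_add_distrib]
    refine Finset.sum_congr rfl fun j _ => ?_
    rw [← Finset.sum_add_distrib]
    refine Finset.sum_congr rfl fun k _ => ?_
    by_cases h : j ≠ k
    · simp only [h, if_true, if_pos h]
      exact key j k h
    · simp [h]
  have := hdouble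
  set R := ∑ j : Fin m, ∑ k : Fin m,
          if j ≠ k then
            ∫ X in {X : Fin m → EuclideanSpace ℝ (Fin p) |
                Real.sign (inner ℝ (X j - X k) β : ℝ) ≠
                  Real.sign (inner ℝ (X j - X k) β0 : ℝ)},
              |q j X - q k X| ∂μ
          else 0 with hR
  have hT : (∑ j : Fin m, ∑ k : Fin m, if j ≠ k then F j k else 0) = R / 2 := by
    linarith [this]
  have hc : ∀ a r : ℝ, (1 / a) * (r / 2) = (1 / (2 * a)) * r := by
    intro a r
    rw [one_div, one_div (2 * a), mul_inv]
    ring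
  rw [hT, show (2:ℝ) * (m:ℝ) * ((m:ℝ) - 1) = 2 * ((m:ℝ) * ((m:ℝ) - 1)) by ring]
  exact hc _ R
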